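/- Let L ≥ 1. Then (-log(1/L) - (L-1)log(1-1/L)) < (-2log(1/L) - 2(L-1)log(1-1/L)) for L ≥ 2; consequently, the maximal log-likelihood over branch lengths of the pattern 'one site with split ac|bd plus L-1 constant sites' on the topology ac|bd, which equals L log(1/2) + log(1/L) + (L-1)log(1-1/L), strictly exceeds the upper bound L log(1/2) + 2log(1/L) + 2(L-1)log(1-1/L) valid for the topology ab|cd, with gap exactly K₁₂ = -log(1/L) - (L-1)log(1-1/L) > 0. -/
import Mathlib

/-- For integers `L ≥ 2`: the value `L log(1/2) + log(1/L) + (L-1) log(1-1/L)` (the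
maximal log-likelihood on topology `ac|bd` of the pattern "one `ac|bd`-split site plus
`L-1` constant sites") strictly exceeds the upper bound
`L log(1/2) + 2 log(1/L) + 2(L-1) log(1-1/L)` (valid for topology `ab|cd`), with gap
exactly `K₁₂ = -log(1/L) - (L-1) log(1-1/L) > 0`. -/
theorem stmt_8 (L : ℕ) (hL : 2 ≤ L) :
    (L : ℝ) * Real.log (1 / 2) + 2 * Real.log (1 / (L : ℝ))
        + 2 * ((L : ℝ) - 1) * Real.log (1 - 1 / (L : ℝ))
      < (L : ℝ) * Real.log (1 / 2) + Real.log (1 / (L : ℝ))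
        + ((L : ℝ) - 1) * Real.log (1 - 1 / (L : ℝ)) ∧
    ((L : ℝ) * Real.log (1 / 2) + Real.log (1 / (L : ℝ))
        + ((L : ℝ) - 1) * Real.log (1 - 1 / (L : ℝ)))
      - ((L : ℝ) * Real.log (1 / 2) + 2 * Real.log (1 / (L : ℝ))
        + 2 * ((L : ℝ) - 1) * Real.log (1 - 1 / (L : ℝ)))
      = -Real.log (1 / (L : ℝ)) - ((L : ℝ) - 1) * Real.log (1 - 1 / (L : ℝ)) ∧
    0 < -Real.log (1 / (L : ℝ)) - ((L : ℝ) - 1) * Real.log (1 - 1 / (L : ℝ)) := by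
  have hL2 : (2 : ℝ) ≤ (L : ℝ) := by exact_mod_cast hL
  have hLpos : (0 : ℝ) < L := by linarith
  have h1 : Real.log (1 / (L : ℝ)) < 0 := by
    apply Real.log_neg <;> [positivity; skip]
    rw [div_lt_one hLpos]; linarith
  have h2 : Real.log (1 - 1 / (L : ℝ)) < 0 := by
    apply Real.log_neg
    · have : 1 / (L : ℝ) < 1 := by rw [div_lt_one hLpos]; linarith
      linarith
    · have : 0 < 1 / (L : ℝ) := by positivity
      linarith
  have h3 : (0 : ℝ) < (L : ℝ) - 1 := by linarith
  have hpos : 0 < -Real.log (1 / (L : ℝ)) - ((L : ℝ) - 1) * Real.log (1 - 1 / (L : ℝ)) := by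
    nlinarith
  exact ⟨by nlinarith, by ring, hpos⟩
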